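/- Let S be a numerical semigroup with e(S) = m(S) − 1. Then S is Apéry half-factorial: every element of Ap(S) has all its factorizations into atoms of the same length. -/

import Mathlib

/-- A numerical semigroup: a cofinite additive submonoid of ℕ. -/
def IsNumericalSemigroup (S : Set ℕ) : Prop :=
  0 ∈ S ∧ (∀ a ∈ S, ∀ b ∈ S, a + b ∈ S) ∧ (Sᶜ : Set ℕ).Finite

/-- The multiplicity: the smallest nonzero element. -/
noncomputable def mult (S : Set ℕ) : ℕ := sInf {n | n ∈ S ∧ n ≠ 0}

/-- The Apéry set of `S` with respect to `m`: elements `x ∈ S` with `x - m ∉ S`. -/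
def Apery (S : Set ℕ) (m : ℕ) : Set ℕ :=
  {x | x ∈ S ∧ ¬∃ y ∈ S, x = y + m}

/-- The atoms of `S`: nonzero elements not a sum of two nonzero elements of `S`. -/
def Atoms (S : Set ℕ) : Set ℕ :=
  {x | x ∈ S ∧ x ≠ 0 ∧ ¬∃ a ∈ S, ∃ b ∈ S, a ≠ 0 ∧ b ≠ 0 ∧ x = a + b}

/-- The set of factorization lengths of `n` over the atom set `A`. -/
def FactLens (A : Set ℕ) (n : ℕ) : Set ℕ :=
  {L | ∃ c : ℕ →₀ ℕ, (↑c.support : Set ℕ) ⊆ A ∧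
    c.sum (fun x k => k * x) = n ∧ c.sum (fun _ k => k) = L}

/-- `n` is half-factorial: all factorization lengths agree. -/
def HalfFactorial (A : Set ℕ) (n : ℕ) : Prop :=
  ∀ L₁ ∈ FactLens A n, ∀ L₂ ∈ FactLens A n, L₁ = L₂

/-- Elasticity: max factorization length over min, with `ρ(0) = 1`. -/
noncomputable def elasticity (A : Set ℕ) (n : ℕ) : ℚ :=
  if n = 0 then 1 else ((sSup (FactLens A n) : ℕ) : ℚ) / ((sInf (FactLens A n) : ℕ) : ℚ)

section Aux

variable {S : Set ℕ}

lemma NS.sum_mem (hS : IsNumericalSemigroup S) :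
    ∀ l : Multiset ℕ, (∀ a ∈ l, a ∈ S) → l.sum ∈ S := by
  intro l
  induction l using Multiset.induction with
  | empty => intro _; simpa using hS.1
  | cons a t ih =>
    intro hl
    rw [Multiset.sum_cons]
    exact hS.2.1 a (hl a (by simp)) t.sum (ih fun b hb => hl b (by simp [hb]))

lemma NS.mult_spec (hS : IsNumericalSemigroup S) : mult S ∈ S ∧ mult S ≠ 0 := by
  have hinf : S.Infinite := by
    have := hS.2.2.infinite_compl
    simpa using this
  have hne : {n | n ∈ S ∧ n ≠ 0}.Nonempty := by
    obtain ⟨x, hx⟩ := (hinf.diff (Set.finite_singleton 0)).nonempty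
    exact ⟨x, hx.1, by simpa using hx.2⟩
  exact Nat.sInf_mem hne

lemma NS.mult_le (hS : IsNumericalSemigroup S) {s : ℕ} (hs : s ∈ S) (h0 : s ≠ 0) :
    mult S ≤ s := Nat.sInf_le ⟨hs, h0⟩

lemma NS.mult_atom (hS : IsNumericalSemigroup S) : mult S ∈ Atoms S := by
  obtain ⟨hmS, hm0⟩ := NS.mult_spec hS
  refine ⟨hmS, hm0, ?_⟩
  rintro ⟨a, ha, b, hb, ha0, hb0, hab⟩
  have h1 := NS.mult_le hS ha ha0
  have h2 := NS.mult_le hS hb hb0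
  omega

lemma NS.add_mul_mult_mem (hS : IsNumericalSemigroup S) {x : ℕ} (hx : x ∈ S) :
    ∀ k : ℕ, x + mult S * k ∈ S := by
  intro k
  induction k with
  | zero => simpa using hx
  | succ j ih =>
    have : x + mult S * (j + 1) = (x + mult S * j) + mult S := by ring
    rw [this]
    exact hS.2.1 _ ih _ (NS.mult_spec hS).1

lemma NS.apery_injOn (hS : IsNumericalSemigroup S) :
    Set.InjOn (· % mult S) (Apery S (mult S)) := by
  have key : ∀ x ∈ Apery S (mult S), ∀ y ∈ Apery S (mult S),
      x % mult S = y % mult S → x ≤ y → x = y := by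
    intro x hx y hy hmod hle
    by_contra hne
    have hdvd : mult S ∣ y - x := (Nat.modEq_iff_dvd' hle).mp hmod
    obtain ⟨k, hk⟩ := hdvd
    have hk0 : k ≠ 0 := by rintro rfl; omega
    obtain ⟨j, rfl⟩ := Nat.exists_eq_succ_of_ne_zero hk0
    have hy2 : y = (x + mult S * j) + mult S := by
      have hsucc : mult S * j.succ = mult S * j + mult S := by rw [Nat.succ_eq_add_one]; ring
      omega
    exact hy.2 ⟨x + mult S * j, NS.add_mul_mult_mem hS hx.1 j, hy2⟩
  intro x hx y hy hmod
  rcases le_total x y with hle | hle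
  · exact key x hx y hy hmod hle
  · exact (key y hy x hx hmod.symm hle).symm

lemma NS.apery_finite (hS : IsNumericalSemigroup S) : (Apery S (mult S)).Finite := by
  apply Set.Finite.of_finite_image _ (NS.apery_injOn hS)
  exact Set.Finite.subset (Set.finite_Iio (mult S))
    (by rintro _ ⟨x, _, rfl⟩; exact Nat.mod_lt _ (Nat.pos_of_ne_zero (NS.mult_spec hS).2))

lemma NS.apery_ncard_le (hS : IsNumericalSemigroup S) :
    (Apery S (mult S)).ncard ≤ mult S := by
  have h1 : (Apery S (mult S)).ncard = ((· % mult S) '' Apery S (mult S)).ncard :=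
    (Set.ncard_image_of_injOn (NS.apery_injOn hS)).symm
  have h2 : ((· % mult S) '' Apery S (mult S)) ⊆ ↑(Finset.range (mult S)) := by
    rintro _ ⟨x, _, rfl⟩
    simp [Nat.mod_lt _ (Nat.pos_of_ne_zero (NS.mult_spec hS).2)]
  calc (Apery S (mult S)).ncard = _ := h1
    _ ≤ (↑(Finset.range (mult S)) : Set ℕ).ncard :=
        Set.ncard_le_ncard h2 (Finset.range (mult S)).finite_toSet
    _ = mult S := by rw [Set.ncard_coe_finset, Finset.card_range]

lemma NS.atoms_sub_apery (hS : IsNumericalSemigroup S) :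
    Atoms S \ {mult S} ⊆ Apery S (mult S) := by
  rintro a ⟨⟨haS, ha0, hna⟩, ham⟩
  refine ⟨haS, ?_⟩
  rintro ⟨y, hy, rfl⟩
  have hy0 : y ≠ 0 := by
    rintro rfl
    exact ham (by simp)
  exact hna ⟨y, hy, mult S, (NS.mult_spec hS).1, hy0, (NS.mult_spec hS).2, rfl⟩

lemma NS.zero_mem_apery (hS : IsNumericalSemigroup S) : 0 ∈ Apery S (mult S) := by
  refine ⟨hS.1, ?_⟩
  rintro ⟨y, _, hy⟩
  have := (NS.mult_spec hS).2
  omega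

lemma NS.atoms_finite (hS : IsNumericalSemigroup S) : (Atoms S).Finite := by
  apply Set.Finite.subset (Set.Finite.insert (mult S) (NS.apery_finite hS))
  intro a ha
  by_cases h : a = mult S
  · simp [h]
  · exact Set.mem_insert_of_mem _ (NS.atoms_sub_apery hS ⟨ha, h⟩)

/-- If `e(S) = m(S) - 1`, there is at most one nonzero non-atom Apéry element. -/
lemma NS.unique_nonatom (hS : IsNumericalSemigroup S)
    (h : (Atoms S).ncard = mult S - 1) (hm : 2 ≤ mult S) :
    ∀ x ∈ Apery S (mult S), x ≠ 0 → x ∉ Atoms S →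
    ∀ y ∈ Apery S (mult S), y ≠ 0 → y ∉ Atoms S → x = y := by
  intro x hx hx0 hxA y hy hy0 hyA
  by_contra hne
  set A' : Set ℕ := Atoms S \ {mult S} with hA'
  have hA'fin : A'.Finite := (NS.atoms_finite hS).diff
  have hA'card : A'.ncard = mult S - 2 := by
    have := Set.ncard_diff_singleton_of_mem (NS.mult_atom hS)
    rw [hA', this, h]
    omega
  have h0A : (0 : ℕ) ∉ Atoms S := fun h' => h'.2.1 rfl
  set B : Set ℕ := insert 0 (insert x (insert y A')) with hB
  have hyB : y ∉ A' := fun h' => hyA h'.1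
  have hxB : x ∉ insert y A' := by
    rintro (h' | h')
    · exact hne h'
    · exact hxA h'.1
  have h0B : (0 : ℕ) ∉ insert x (insert y A') := by
    rintro (h' | h' | h')
    · exact hx0 h'.symm
    · exact hy0 h'.symm
    · exact h0A h'.1
  have hcard : B.ncard = mult S + 1 := by
    rw [hB, Set.ncard_insert_of_notMem h0B (((hA'fin.insert y).insert x)),
      Set.ncard_insert_of_notMem hxB (hA'fin.insert y),
      Set.ncard_insert_of_notMem hyB hA'fin, hA'card]
    omega
  have hBsub : B ⊆ Apery S (mult S) := by
    rintro b (h' | h' | h' | h')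
    · rw [h']; exact NS.zero_mem_apery hS
    · rw [h']; exact hx
    · rw [h']; exact hy
    · exact NS.atoms_sub_apery hS h'
  have := Set.ncard_le_ncard hBsub (NS.apery_finite hS)
  have := NS.apery_ncard_le hS
  omega

open Classical in
/-- The key combinatorial lemma: any multiset factorization of an Apéry element
has length determined by the element. -/
lemma NS.card_of_fact (hS : IsNumericalSemigroup S)
    (h : (Atoms S).ncard = mult S - 1) (hm : 2 ≤ mult S) :
    ∀ n ∈ Apery S (mult S), ∀ l : Multiset ℕ, (∀ a ∈ l, a ∈ Atoms S) → l.sum = n →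
      Multiset.card l = (if n = 0 then 0 else if n ∈ Atoms S then 1 else 2) := by
  intro n hn l hl hsum
  have hlS : ∀ a ∈ l, a ∈ S := fun a ha => (hl a ha).1
  -- helper to peel one element
  have peel : ∀ t : Multiset ℕ, t ≠ 0 → ∃ a s, t = a ::ₘ s :=
    fun t ht => by
      obtain ⟨a, ha⟩ := Multiset.exists_mem_of_ne_zero ht
      obtain ⟨s, hs⟩ := Multiset.exists_cons_of_mem ha
      exact ⟨a, s, hs⟩
  by_cases hn0 : n = 0
  · -- all atoms are nonzero, so the multiset must be empty
    rw [if_pos hn0]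
    rw [Multiset.card_eq_zero]
    by_contra hl0
    obtain ⟨a, t, rfl⟩ := peel l hl0
    have ha := hl a (by simp)
    rw [Multiset.sum_cons] at hsum
    exact ha.2.1 (by omega)
  · rw [if_neg hn0]
    have hcne : Multiset.card l ≠ 0 := by
      intro hc
      rw [Multiset.card_eq_zero] at hc
      subst hc
      simp at hsum
      exact hn0 hsum.symm
    by_cases hnA : n ∈ Atoms S
    · rw [if_pos hnA]
      -- an atom can't be a sum of two or more atoms
      by_contra hc1
      have h2 : 2 ≤ Multiset.card l := by omega
      obtain ⟨a, t, rfl⟩ := peel l (by rintro rfl; simp at h2)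
      obtain ⟨b, u, rfl⟩ := peel t (by rintro rfl; simp at h2)
      rw [Multiset.sum_cons, Multiset.sum_cons] at hsum
      have ha := hl a (by simp)
      have hb := hl b (by simp)
      have hrS : b + u.sum ∈ S :=
        hS.2.1 b hb.1 u.sum (NS.sum_mem hS u (fun c hc => (hl c (by simp [hc])).1))
      exact hnA.2.2 ⟨a, ha.1, b + u.sum, hrS, ha.2.1, by have := hb.2.1; omega, by omega⟩
    · rw [if_neg hnA]
      have hc1 : Multiset.card l ≠ 1 := by
        intro hc
        rw [Multiset.card_eq_one] at hc
        obtain ⟨a, rfl⟩ := hc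
        simp at hsum
        exact hnA (hsum ▸ hl a (by simp))
      by_contra hc2
      have h3 : 3 ≤ Multiset.card l := by omega
      obtain ⟨a, t, rfl⟩ := peel l (by rintro rfl; simp at h3)
      obtain ⟨b, u, rfl⟩ := peel t (by rintro rfl; simp at h3)
      obtain ⟨c, v, rfl⟩ := peel u (by rintro rfl; simp at h3)
      simp only [Multiset.sum_cons] at hsum
      have ha := hl a (by simp)
      have hb := hl b (by simp)
      have hc := hl c (by simp)
      have hvS : v.sum ∈ S := NS.sum_mem hS v (fun d hd => (hl d (by simp [hd])).1)
      have hrS : c + v.sum ∈ S := hS.2.1 c hc.1 v.sum hvS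
      have huS : a + b ∈ S := hS.2.1 a ha.1 b hb.1
      have hu0 : a + b ≠ 0 := by have := ha.2.1; omega
      have huA : a + b ∉ Atoms S := fun h' =>
        h'.2.2 ⟨a, ha.1, b, hb.1, ha.2.1, hb.2.1, rfl⟩
      have huAp : a + b ∈ Apery S (mult S) := by
        refine ⟨huS, ?_⟩
        rintro ⟨y, hy, hy2⟩
        exact hn.2 ⟨y + (c + v.sum), hS.2.1 y hy _ hrS, by omega⟩
      have := NS.unique_nonatom hS h hm (a + b) huAp hu0 huA n hn hn0 hnA
      have hcpos := hc.2.1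
      omega

lemma NS.toMultiset_sum_eq (c : ℕ →₀ ℕ) :
    (Finsupp.toMultiset c).sum = c.sum fun x k => k * x := by
  induction c using Finsupp.induction with
  | zero => simp
  | single_add a n f han hn ih =>
    rw [Finsupp.toMultiset_add, Multiset.sum_add, ih, Finsupp.toMultiset_single,
      Finsupp.sum_add_index' (fun _ => by simp) (fun _ _ _ => by ring),
      Finsupp.sum_single_index (by simp)]
    simp [Multiset.nsmul_singleton, Multiset.sum_replicate, mul_comm]

end Aux

theorem AHF_of_embdim_eq_mult_sub_one (S : Set ℕ)
    (hS : IsNumericalSemigroup S) (h : (Atoms S).ncard = mult S - 1)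
    (hm : 2 ≤ mult S) :
    ∀ n ∈ Apery S (mult S), HalfFactorial (Atoms S) n := by
  classical
  intro n hn L₁ hL₁ L₂ hL₂
  have key : ∀ L ∈ FactLens (Atoms S) n,
      L = (if n = 0 then 0 else if n ∈ Atoms S then 1 else 2) := by
    rintro L ⟨c, hsupp, hsum, hlen⟩
    have hmem : ∀ a ∈ Finsupp.toMultiset c, a ∈ Atoms S := by
      intro a ha
      rw [Finsupp.mem_toMultiset] at ha
      exact hsupp ha
    have hsum' : (Finsupp.toMultiset c).sum = n := by
      rw [NS.toMultiset_sum_eq]; exact hsum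
    have hcard : Multiset.card (Finsupp.toMultiset c) = L := by
      rw [Finsupp.card_toMultiset]; exact hlen
    rw [← hcard]
    exact NS.card_of_fact hS h hm n hn _ hmem hsum'
  rw [key L₁ hL₁, key L₂ hL₂]
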